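/- (Example 3: sharp rate for a birth–death process with absorption in zero.) Fix S ≥ 2 and a continuous function φ : [0,∞) → [0,∞). Consider the absorbing-state setting with birth–death intensities: q_{k,k+1}(t) = 2φ(t) for 1 ≤ k ≤ S−1, q_{1,0}(t) = 3φ(t), q_{k,k−1}(t) = 6φ(t) for 2 ≤ k ≤ S−1, q_{S,S−1}(t) = 2φ(t), all other intensities zero (in particular q_{0j} ≡ 0). Take d_k = 2^{k−1} for 1 ≤ k ≤ S and D = diag(d_1,…,d_S). Then α_k(t) := ∑_{j=0, j≠k}^{S} q_{kj}(t) − ∑_{i=1, i≠k}^{S} (d_i/d_k) q_{ki}(t) equals φ(t) for every 1 ≤ k ≤ S and t ≥ 0; consequently, for any two differentiable functions z*, z** : [0,∞) → ℝ^S with z'(t) = B(t)z(t) for all t ≥ 0, one has ‖D(z*(t) − z**(t))‖₁ ≤ exp(−∫₀ᵗ φ(τ) dτ) · ‖D(z*(0) − z**(0))‖₁ for all t ≥ 0, with equality whenever z*(0) − z**(0) ≥ 0 componentwise. -/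

import Mathlib

open Set Filter Topology

/-- The reduced matrix `B(t)` of a Markov chain on `{0,…,S}` with transition
intensities `q_{ij}(t)`: `B_{ij} = q_{ji}` for `i ≠ j` and
`B_{ii} = −∑_{j≠i} q_{ij}` (1-based indices `1,…,S` encoded by
`i : Fin S ↦ i+1`). -/
def absB (S : ℕ) (q : ℕ → ℕ → ℝ → ℝ) (t : ℝ) : Matrix (Fin S) (Fin S) ℝ :=
  fun i j =>
    if i = j then -∑ k ∈ (Finset.range (S + 1)).erase ((i : ℕ) + 1), q ((i : ℕ) + 1) k t
    else q ((j : ℕ) + 1) ((i : ℕ) + 1) t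

/-- The intensities of Example 3: `q_{k,k+1} = 2φ` for `1 ≤ k ≤ S−1`,
`q_{1,0} = 3φ`, `q_{k,k−1} = 6φ` for `2 ≤ k ≤ S−1`, `q_{S,S−1} = 2φ`, all other
intensities zero (in particular state `0` is absorbing). -/
def exQ (S : ℕ) (phi : ℝ → ℝ) : ℕ → ℕ → ℝ → ℝ :=
  fun i j t =>
    if 1 ≤ i ∧ i ≤ S - 1 ∧ j = i + 1 then 2 * phi t
    else if i = 1 ∧ j = 0 then 3 * phi t
    else if 2 ≤ i ∧ i ≤ S - 1 ∧ j = i - 1 then 6 * phi t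
    else if i = S ∧ j = S - 1 then 2 * phi t
    else 0

lemma alpha_eq (S : ℕ) (hS : 2 ≤ S) (phi : ℝ → ℝ) (t : ℝ) (k : Fin S) :
    (∑ j ∈ (Finset.range (S + 1)).erase ((k : ℕ) + 1), exQ S phi ((k : ℕ) + 1) j t) -
      (∑ i ∈ (Finset.Icc 1 S).erase ((k : ℕ) + 1),
        (2 : ℝ) ^ (i - 1) / (2 : ℝ) ^ (k : ℕ) * exQ S phi ((k : ℕ) + 1) i t) = phi t := by
  obtain ⟨n, rfl⟩ : ∃ n, S = n + 2 := ⟨S - 2, by omega⟩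
  have hkS : (k : ℕ) < n + 2 := k.isLt
  rcases Nat.lt_or_ge (k : ℕ) 1 with hk | hk
  · -- k' = 1
    have hk0 : (k : ℕ) = 0 := by omega
    rw [hk0]
    have h1 : (∑ j ∈ (Finset.range (n + 2 + 1)).erase (0 + 1), exQ (n + 2) phi (0 + 1) j t)
        = 5 * phi t := by
      have hpt : ∀ j ∈ (Finset.range (n + 2 + 1)).erase (0 + 1),
          exQ (n + 2) phi (0 + 1) j t =
          (if j = 0 then 3 * phi t else 0) + (if j = 2 then 2 * phi t else 0) := by
        intro j hj
        simp only [Finset.mem_erase, Finset.mem_range] at hj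
        unfold exQ
        split_ifs <;> first | omega | ring1
      rw [Finset.sum_congr rfl hpt, Finset.sum_add_distrib,
        Finset.sum_ite_eq', Finset.sum_ite_eq']
      have m0 : (0 : ℕ) ∈ (Finset.range (n + 2 + 1)).erase (0 + 1) := by
        simp only [Finset.mem_erase, Finset.mem_range]; omega
      have m2 : (2 : ℕ) ∈ (Finset.range (n + 2 + 1)).erase (0 + 1) := by
        simp only [Finset.mem_erase, Finset.mem_range]; omega
      rw [if_pos m0, if_pos m2]; ring
    have h2 : (∑ i ∈ (Finset.Icc 1 (n + 2)).erase (0 + 1),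
          (2 : ℝ) ^ (i - 1) / (2 : ℝ) ^ (0 : ℕ) * exQ (n + 2) phi (0 + 1) i t)
        = 4 * phi t := by
      have hpt : ∀ i ∈ (Finset.Icc 1 (n + 2)).erase (0 + 1),
          (2 : ℝ) ^ (i - 1) / (2 : ℝ) ^ (0 : ℕ) * exQ (n + 2) phi (0 + 1) i t =
          (if i = 2 then 4 * phi t else 0) := by
        intro i hi
        simp only [Finset.mem_erase, Finset.mem_Icc] at hi
        by_cases h2 : i = 2
        · subst h2
          unfold exQ
          have : (1 ≤ 0 + 1 ∧ 0 + 1 ≤ n + 2 - 1 ∧ 2 = 0 + 1 + 1) := by omega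
          rw [if_pos this, if_pos rfl]
          norm_num
          try ring
        · have hz : exQ (n + 2) phi (0 + 1) i t = 0 := by
            unfold exQ; split_ifs <;> first | omega | rfl
          rw [hz, if_neg h2]; ring
      rw [Finset.sum_congr rfl hpt, Finset.sum_ite_eq']
      have m2 : (2 : ℕ) ∈ (Finset.Icc 1 (n + 2)).erase (0 + 1) := by
        simp only [Finset.mem_erase, Finset.mem_Icc]; omega
      rw [if_pos m2]
    rw [h1, h2]; ring
  · rcases Nat.lt_or_ge (k : ℕ) (n + 1) with hkm | hkm
    · -- middle: 2 ≤ k' ≤ S - 1, (k:ℕ) = m+1, 1 ≤ m+1 ≤ n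
      obtain ⟨m, hm⟩ : ∃ m, (k : ℕ) = m + 1 := ⟨(k : ℕ) - 1, by omega⟩
      rw [hm]
      have hmn : m + 1 ≤ n := by omega
      have h1 : (∑ j ∈ (Finset.range (n + 2 + 1)).erase (m + 1 + 1),
            exQ (n + 2) phi (m + 1 + 1) j t) = 8 * phi t := by
        have hpt : ∀ j ∈ (Finset.range (n + 2 + 1)).erase (m + 1 + 1),
            exQ (n + 2) phi (m + 1 + 1) j t =
            (if j = m + 3 then 2 * phi t else 0) + (if j = m + 1 then 6 * phi t else 0) := by
          intro j hj
          simp only [Finset.mem_erase, Finset.mem_range] at hj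
          unfold exQ
          split_ifs <;> first | omega | ring1
        rw [Finset.sum_congr rfl hpt, Finset.sum_add_distrib,
          Finset.sum_ite_eq', Finset.sum_ite_eq']
        have m3 : m + 3 ∈ (Finset.range (n + 2 + 1)).erase (m + 1 + 1) := by
          simp only [Finset.mem_erase, Finset.mem_range, Finset.mem_Icc]; omega
        have m1 : m + 1 ∈ (Finset.range (n + 2 + 1)).erase (m + 1 + 1) := by
          simp only [Finset.mem_erase, Finset.mem_range, Finset.mem_Icc]; omega
        rw [if_pos m3, if_pos m1]; ring
      have h2 : (∑ i ∈ (Finset.Icc 1 (n + 2)).erase (m + 1 + 1),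
            (2 : ℝ) ^ (i - 1) / (2 : ℝ) ^ (m + 1) * exQ (n + 2) phi (m + 1 + 1) i t)
          = 7 * phi t := by
        have hpt : ∀ i ∈ (Finset.Icc 1 (n + 2)).erase (m + 1 + 1),
            (2 : ℝ) ^ (i - 1) / (2 : ℝ) ^ (m + 1) * exQ (n + 2) phi (m + 1 + 1) i t =
            (if i = m + 3 then 4 * phi t else 0) + (if i = m + 1 then 3 * phi t else 0) := by
          intro i hi
          simp only [Finset.mem_erase, Finset.mem_Icc] at hi
          by_cases e1 : i = m + 3
          · subst e1
            have hq : exQ (n + 2) phi (m + 1 + 1) (m + 3) t = 2 * phi t := by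
              unfold exQ
              rw [if_pos (by omega)]
            rw [hq, if_pos rfl, if_neg (by omega)]
            have : m + 3 - 1 = m + 2 := by omega
            rw [this, pow_succ]
            field_simp; try ring
          · by_cases e2 : i = m + 1
            · subst e2
              have hq : exQ (n + 2) phi (m + 1 + 1) (m + 1) t = 6 * phi t := by
                unfold exQ
                rw [if_neg (by omega), if_neg (by omega), if_pos (by omega)]
              rw [hq, if_neg e1, if_pos rfl]
              have : m + 1 - 1 = m := by omega
              rw [this, pow_succ]
              field_simp; try ring
            · have hz : exQ (n + 2) phi (m + 1 + 1) i t = 0 := by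
                unfold exQ; split_ifs <;> first | omega | rfl
              rw [hz, if_neg e1, if_neg e2]; ring
        rw [Finset.sum_congr rfl hpt, Finset.sum_add_distrib,
          Finset.sum_ite_eq', Finset.sum_ite_eq']
        have m3 : m + 3 ∈ (Finset.Icc 1 (n + 2)).erase (m + 1 + 1) := by
          simp only [Finset.mem_erase, Finset.mem_range, Finset.mem_Icc]; omega
        have m1 : m + 1 ∈ (Finset.Icc 1 (n + 2)).erase (m + 1 + 1) := by
          simp only [Finset.mem_erase, Finset.mem_range, Finset.mem_Icc]; omega
        rw [if_pos m3, if_pos m1]; ring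
      rw [h1, h2]; ring
    · -- k' = S, (k:ℕ) = n + 1
      have hk1 : (k : ℕ) = n + 1 := by omega
      rw [hk1]
      have h1 : (∑ j ∈ (Finset.range (n + 2 + 1)).erase (n + 1 + 1),
            exQ (n + 2) phi (n + 1 + 1) j t) = 2 * phi t := by
        have hpt : ∀ j ∈ (Finset.range (n + 2 + 1)).erase (n + 1 + 1),
            exQ (n + 2) phi (n + 1 + 1) j t =
            (if j = n + 1 then 2 * phi t else 0) := by
          intro j hj
          simp only [Finset.mem_erase, Finset.mem_range] at hj
          unfold exQ
          split_ifs <;> first | omega | ring1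
        rw [Finset.sum_congr rfl hpt, Finset.sum_ite_eq']
        have m1 : n + 1 ∈ (Finset.range (n + 2 + 1)).erase (n + 1 + 1) := by
          simp only [Finset.mem_erase, Finset.mem_range, Finset.mem_Icc]; omega
        rw [if_pos m1]
      have h2 : (∑ i ∈ (Finset.Icc 1 (n + 2)).erase (n + 1 + 1),
            (2 : ℝ) ^ (i - 1) / (2 : ℝ) ^ (n + 1) * exQ (n + 2) phi (n + 1 + 1) i t)
          = phi t := by
        have hpt : ∀ i ∈ (Finset.Icc 1 (n + 2)).erase (n + 1 + 1),
            (2 : ℝ) ^ (i - 1) / (2 : ℝ) ^ (n + 1) * exQ (n + 2) phi (n + 1 + 1) i t =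
            (if i = n + 1 then phi t else 0) := by
          intro i hi
          simp only [Finset.mem_erase, Finset.mem_Icc] at hi
          by_cases e1 : i = n + 1
          · subst e1
            have hq : exQ (n + 2) phi (n + 1 + 1) (n + 1) t = 2 * phi t := by
              unfold exQ
              rw [if_neg (by omega), if_neg (by omega), if_neg (by omega),
                if_pos (by omega)]
            rw [hq, if_pos rfl]
            have : n + 1 - 1 = n := by omega
            rw [this, pow_succ]
            field_simp; try ring
          · have hz : exQ (n + 2) phi (n + 1 + 1) i t = 0 := by
              unfold exQ; split_ifs <;> first | omega | rfl
            rw [hz, if_neg e1]; ring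
        rw [Finset.sum_congr rfl hpt, Finset.sum_ite_eq']
        have m1 : n + 1 ∈ (Finset.Icc 1 (n + 2)).erase (n + 1 + 1) := by
          simp only [Finset.mem_erase, Finset.mem_range, Finset.mem_Icc]; omega
        rw [if_pos m1]
      rw [h1, h2]; ring

lemma sum_reindex (S : ℕ) (j : Fin S) (f : ℕ → ℝ) :
    ∑ x ∈ (Finset.Icc 1 S).erase ((j : ℕ) + 1), f x
      = ∑ i ∈ Finset.univ.erase j, f ((i : ℕ) + 1) := by
  refine Finset.sum_bij'
    (fun x hx => (⟨x - 1, by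
      simp only [Finset.mem_erase, Finset.mem_Icc] at hx; omega⟩ : Fin S))
    (fun i _ => (i : ℕ) + 1) ?_ ?_ ?_ ?_ ?_
  · intro a ha
    simp only [Finset.mem_erase, Finset.mem_Icc] at ha
    simp only [Finset.mem_erase, Finset.mem_univ, and_true]
    intro h
    have : a - 1 = (j : ℕ) := congrArg Fin.val h
    omega
  · intro a ha
    simp only [Finset.mem_erase, Finset.mem_univ, and_true] at ha
    simp only [Finset.mem_erase, Finset.mem_Icc]
    have halt : (a : ℕ) < S := a.isLt
    refine ⟨?_, by omega, by omega⟩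
    intro h
    exact ha (Fin.ext (by omega))
  · intro a ha
    simp only [Finset.mem_erase, Finset.mem_Icc] at ha
    simp only [Fin.val_mk]
    omega
  · intro a _
    exact Fin.ext (by simp)
  · intro a ha
    simp only [Finset.mem_erase, Finset.mem_Icc] at ha
    simp only [Fin.val_mk]
    congr 1
    omega

lemma Mcol (S : ℕ) (hS : 2 ≤ S) (phi : ℝ → ℝ) (t : ℝ) (j : Fin S) :
    ∑ i : Fin S, (2:ℝ)^(i:ℕ) * absB S (exQ S phi) t i j / (2:ℝ)^(j:ℕ) = -phi t := by
  have key := alpha_eq S hS phi t j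
  rw [sum_reindex S j] at key
  rw [← Finset.add_sum_erase _ _ (Finset.mem_univ j)]
  have h1 : (2:ℝ)^(j:ℕ) * absB S (exQ S phi) t j j / (2:ℝ)^(j:ℕ)
      = -(∑ x ∈ (Finset.range (S + 1)).erase ((j : ℕ) + 1), exQ S phi ((j : ℕ) + 1) x t) := by
    unfold absB
    rw [if_pos rfl]
    have h2 : (2:ℝ)^(j:ℕ) ≠ 0 := by positivity
    field_simp
  have h2 : ∀ i ∈ Finset.univ.erase j,
      (2:ℝ)^(i:ℕ) * absB S (exQ S phi) t i j / (2:ℝ)^(j:ℕ)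
      = (2:ℝ)^(((i:ℕ)+1) - 1) / (2:ℝ)^(j:ℕ) * exQ S phi ((j:ℕ)+1) ((i:ℕ)+1) t := by
    intro i hi
    have hne : i ≠ j := (Finset.mem_erase.mp hi).1
    unfold absB
    rw [if_neg hne]
    simp only [Nat.add_sub_cancel]
    ring
  rw [h1, Finset.sum_congr rfl h2]
  linarith [key]

lemma primitive_hasDeriv {phi : ℝ → ℝ} (hc : ContinuousOn phi (Ici 0)) {t : ℝ} (ht : 0 ≤ t) :
    HasDerivWithinAt (fun x => ∫ τ in (0:ℝ)..x, phi τ) (phi t) (Ici t) t := by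
  have hsub : Icc (0:ℝ) t ⊆ Ici 0 := Icc_subset_Ici_self
  have hint : IntervalIntegrable phi MeasureTheory.volume 0 t :=
    (hc.mono (by rw [uIcc_of_le ht]; exact hsub)).intervalIntegrable
  have hIoi : Ioi t ⊆ Ici (0:ℝ) := fun x hx => le_trans ht (le_of_lt hx)
  refine intervalIntegral.integral_hasDerivWithinAt_right hint
    ⟨Ioi t, self_mem_nhdsWithin, ?_⟩ ((hc t ht).mono hIoi)
  exact (hc.mono hIoi).aestronglyMeasurable measurableSet_Ioi

lemma primitive_hasDerivAt {phi : ℝ → ℝ} (hc : ContinuousOn phi (Ici 0)) {t : ℝ} (ht : 0 < t) :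
    HasDerivAt (fun x => ∫ τ in (0:ℝ)..x, phi τ) (phi t) t := by
  have hsub : Icc (0:ℝ) t ⊆ Ici 0 := Icc_subset_Ici_self
  have hint : IntervalIntegrable phi MeasureTheory.volume 0 t :=
    (hc.mono (by rw [uIcc_of_le ht.le]; exact hsub)).intervalIntegrable
  have hmem : Ici (0:ℝ) ∈ nhds t := Ici_mem_nhds ht
  refine intervalIntegral.integral_hasDerivAt_right hint
    ⟨Ici 0, hmem, hc.aestronglyMeasurable measurableSet_Ici⟩ ?_
  exact hc.continuousAt hmem

lemma primitive_cont {phi : ℝ → ℝ} (hc : ContinuousOn phi (Ici 0)) :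
    ContinuousOn (fun x => ∫ τ in (0:ℝ)..x, phi τ) (Ici 0) := by
  intro t ht
  rcases eq_or_lt_of_le (mem_Ici.mp ht) with h | h
  · rw [← h]
    exact (primitive_hasDeriv hc le_rfl).continuousWithinAt
  · exact (primitive_hasDerivAt hc h).continuousAt.continuousWithinAt

lemma primitive_mono {phi : ℝ → ℝ} (hc : ContinuousOn phi (Ici 0))
    (hpos : ∀ u ∈ Ici (0:ℝ), 0 ≤ phi u) {t b : ℝ} (ht : 0 ≤ t) (htb : t ≤ b) :
    (∫ τ in (0:ℝ)..t, phi τ) ≤ ∫ τ in (0:ℝ)..b, phi τ := by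
  have h1 : IntervalIntegrable phi MeasureTheory.volume 0 t :=
    (hc.mono (by rw [uIcc_of_le ht]; exact Icc_subset_Ici_self)).intervalIntegrable
  have h2 : IntervalIntegrable phi MeasureTheory.volume t b :=
    (hc.mono (by rw [uIcc_of_le htb]; exact fun x hx => le_trans ht hx.1)).intervalIntegrable
  rw [← intervalIntegral.integral_add_adjacent_intervals h1 h2]
  have h3 : 0 ≤ ∫ τ in t..b, phi τ :=
    intervalIntegral.integral_nonneg htb (fun u hu => hpos u (le_trans ht hu.1))
  linarith

lemma contraction (S : ℕ) (phi : ℝ → ℝ)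
    (hc : ContinuousOn phi (Ici 0)) (hpos : ∀ u ∈ Ici (0:ℝ), 0 ≤ phi u)
    (M : ℝ → Fin S → Fin S → ℝ)
    (hMoff : ∀ t ∈ Ici (0:ℝ), ∀ i j : Fin S, i ≠ j → 0 ≤ M t i j)
    (hMcol : ∀ t ∈ Ici (0:ℝ), ∀ j, ∑ i, M t i j = -phi t)
    (C : ℝ) (hC : 0 ≤ C)
    (hMC : ∀ t ∈ Ici (0:ℝ), ∑ j, |M t j j| ≤ C * phi t)
    (w : ℝ → Fin S → ℝ)
    (hw : ∀ t ∈ Ici (0:ℝ), ∀ i, HasDerivWithinAt (fun s => w s i)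
      (∑ j, M t i j * w t j) (Ici 0) t)
    {b : ℝ} (hb : 0 ≤ b) :
    ∑ i, |w b i| ≤ Real.exp (-∫ τ in (0:ℝ)..b, phi τ) * ∑ i, |w 0 i| := by
  set I : ℝ → ℝ := fun x => ∫ τ in (0:ℝ)..x, phi τ with hIdef
  have hI0 : I 0 = 0 := intervalIntegral.integral_same
  have hIcont : ContinuousOn I (Ici 0) := primitive_cont hc
  have hwc : ∀ i, ContinuousOn (fun s => w s i) (Ici 0) :=
    fun i t ht => (hw t ht i).continuousWithinAt
  -- diagonal entries are nonpositive
  have hMdiag : ∀ t ∈ Ici (0:ℝ), ∀ j, M t j j ≤ 0 := by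
    intro t ht j
    have h1 : M t j j + ∑ i ∈ Finset.univ.erase j, M t i j = -phi t := by
      have h0 := hMcol t ht j
      rw [← Finset.add_sum_erase _ (fun i => M t i j) (Finset.mem_univ j)] at h0
      exact h0
    have h2 : 0 ≤ ∑ i ∈ Finset.univ.erase j, M t i j :=
      Finset.sum_nonneg fun i hi => hMoff t ht i j (Finset.mem_erase.mp hi).1
    have h3 : 0 ≤ phi t := hpos t ht
    linarith
  -- main epsilon-estimate
  have main : ∀ ε : ℝ, ε ∈ Ioi (0:ℝ) →
      Real.exp (I b) * (∑ i, Real.sqrt ((w b i)^2 + ε^2))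
        ≤ (∑ i, Real.sqrt ((w 0 i)^2 + ε^2)) + ε * (C * Real.exp (I b)) * I b := by
    intro ε hε
    rw [mem_Ioi] at hε
    set g : ℝ → ℝ := fun t => Real.exp (I t) * ∑ i, Real.sqrt ((w t i)^2 + ε^2) with hgdef
    set g' : ℝ → ℝ := fun t =>
      phi t * Real.exp (I t) * (∑ i, Real.sqrt ((w t i)^2 + ε^2))
        + Real.exp (I t) *
          ∑ i, (2 * w t i * (∑ j, M t i j * w t j)) / (2 * Real.sqrt ((w t i)^2 + ε^2))
      with hg'def
    have hrpos : ∀ t, ∀ i : Fin S, 0 < Real.sqrt ((w t i)^2 + ε^2) := by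
      intro t i; apply Real.sqrt_pos.mpr; positivity
    -- derivative of g
    have hgderiv : ∀ t ∈ Ici (0:ℝ), HasDerivWithinAt g (g' t) (Ici t) t := by
      intro t ht
      have hmono : Ici t ⊆ Ici (0:ℝ) := Ici_subset_Ici.mpr ht
      have hE : HasDerivWithinAt (fun s => Real.exp (I s)) (Real.exp (I t) * phi t) (Ici t) t :=
        ((primitive_hasDeriv hc ht).exp)
      have hV : HasDerivWithinAt (fun s => ∑ i, Real.sqrt ((w s i)^2 + ε^2))
          (∑ i, (2 * w t i * (∑ j, M t i j * w t j)) / (2 * Real.sqrt ((w t i)^2 + ε^2)))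
          (Ici t) t := by
        apply HasDerivWithinAt.fun_sum
        intro i _
        have hwi : HasDerivWithinAt (fun s => w s i) (∑ j, M t i j * w t j) (Ici t) t :=
          (hw t ht i).mono hmono
        have hsq : HasDerivWithinAt (fun s => (w s i)^2 + ε^2)
            (2 * w t i * (∑ j, M t i j * w t j)) (Ici t) t := by
          have := (hwi.mul hwi).add_const (ε^2)
          convert this using 1
          · rfl
          · rfl
          · funext s; simp only [Pi.mul_apply]; ring
          · ring
        have hne : (w t i)^2 + ε^2 ≠ 0 := by positivity
        have := hsq.sqrt hne
        convert this using 2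
      have := hE.mul hV
      refine this.congr_deriv ?_
      simp only [hg'def]
      ring
    -- continuity of g on Icc 0 b
    have hgcont : ContinuousOn g (Icc 0 b) := by
      apply ContinuousOn.mono _ (Icc_subset_Ici_self : Icc (0:ℝ) b ⊆ Ici 0)
      apply ContinuousOn.mul (Real.continuous_exp.comp_continuousOn hIcont)
      apply continuousOn_finset_sum
      intro i _
      exact Real.continuous_sqrt.comp_continuousOn
        (((hwc i).pow 2).add continuousOn_const)
    -- the derivative bound
    have hbound : ∀ t ∈ Ico (0:ℝ) b, g' t ≤ ε * (C * Real.exp (I b)) * phi t := by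
      intro t ht
      obtain ⟨ht0, htb⟩ := ht
      have htI : t ∈ Ici (0:ℝ) := ht0
      have hφ : 0 ≤ phi t := hpos t htI
      set r : Fin S → ℝ := fun i => Real.sqrt ((w t i)^2 + ε^2) with hrdef
      have hrp : ∀ i, 0 < r i := fun i => hrpos t i
      have hrsq : ∀ i, (r i)^2 = (w t i)^2 + ε^2 := by
        intro i; apply Real.sq_sqrt; positivity
      have hrε : ∀ i, ε ≤ r i := by
        intro i
        have h2 : ε = Real.sqrt (ε^2) := (Real.sqrt_sq hε.le).symm
        rw [h2]
        exact Real.sqrt_le_sqrt (by nlinarith [sq_nonneg (w t i)])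
      have habs : ∀ i, |w t i| ≤ r i := by
        intro i
        have : |w t i| = Real.sqrt ((w t i)^2) := (Real.sqrt_sq_eq_abs _).symm
        rw [this]
        exact Real.sqrt_le_sqrt (by nlinarith [sq_nonneg ε])
      -- key sum estimate
      have hkey : ∑ i, (2 * w t i * (∑ j, M t i j * w t j)) / (2 * r i)
          ≤ -phi t * (∑ i, r i) + ε * (C * phi t) := by
        have hstep1 : ∀ i : Fin S, (2 * w t i * (∑ j, M t i j * w t j)) / (2 * r i)
            = ∑ j, (w t i / r i) * (M t i j * w t j) := by
          intro i
          rw [Finset.mul_sum]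
          rw [Finset.sum_div]
          apply Finset.sum_congr rfl
          intro j _
          have := (hrp i).ne'
          field_simp
        rw [Finset.sum_congr rfl (fun i _ => hstep1 i), Finset.sum_comm]
        have hper : ∀ j : Fin S, ∑ i, (w t i / r i) * (M t i j * w t j)
            ≤ -phi t * r j + ε * |M t j j| := by
          intro j
          rw [← Finset.add_sum_erase _ _ (Finset.mem_univ j)]
          have hMjj : M t j j ≤ 0 := hMdiag t htI j
          -- diagonal term
          have hd : (w t j / r j) * (M t j j * w t j) ≤ M t j j * (r j - ε) := by
            have hsw : r j - ε ≤ w t j / r j * w t j := by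
              rw [div_mul_eq_mul_div]
              rw [le_div_iff₀ (hrp j)]
              have : w t j * w t j = (r j)^2 - ε^2 := by
                have := hrsq j; nlinarith
              rw [this]
              have := hrε j
              nlinarith
            calc (w t j / r j) * (M t j j * w t j) = M t j j * (w t j / r j * w t j) := by ring
              _ ≤ M t j j * (r j - ε) := by
                  apply mul_le_mul_of_nonpos_left hsw hMjj
          -- off-diagonal terms
          have ho : ∑ i ∈ Finset.univ.erase j, (w t i / r i) * (M t i j * w t j)
              ≤ ∑ i ∈ Finset.univ.erase j, M t i j * r j := by
            apply Finset.sum_le_sum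
            intro i hi
            have hMij : 0 ≤ M t i j := hMoff t htI i j (Finset.mem_erase.mp hi).1
            have h1 : (w t i / r i) * w t j ≤ r j := by
              have h2 : |(w t i / r i) * w t j| ≤ r j := by
                rw [abs_mul, abs_div]
                have h3 : |w t i| / |r i| ≤ 1 := by
                  rw [abs_of_pos (hrp i)]
                  rw [div_le_one (hrp i)]
                  exact habs i
                calc |w t i| / |r i| * |w t j| ≤ 1 * |w t j| :=
                      mul_le_mul_of_nonneg_right h3 (abs_nonneg _)
                  _ = |w t j| := one_mul _
                  _ ≤ r j := habs j
              exact le_trans (le_abs_self _) h2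
            calc (w t i / r i) * (M t i j * w t j) = M t i j * ((w t i / r i) * w t j) := by ring
              _ ≤ M t i j * r j := mul_le_mul_of_nonneg_left h1 hMij
          have hsum_erase : ∑ i ∈ Finset.univ.erase j, M t i j = -phi t - M t j j := by
            have := hMcol t htI j
            rw [← Finset.add_sum_erase _ _ (Finset.mem_univ j)] at this
            linarith
          calc (w t j / r j) * (M t j j * w t j)
                + ∑ i ∈ Finset.univ.erase j, (w t i / r i) * (M t i j * w t j)
              ≤ M t j j * (r j - ε) + ∑ i ∈ Finset.univ.erase j, M t i j * r j :=
                add_le_add hd ho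
            _ = M t j j * (r j - ε) + (-phi t - M t j j) * r j := by
                rw [← Finset.sum_mul, hsum_erase]
            _ = -phi t * r j + ε * (-M t j j) := by ring
            _ = -phi t * r j + ε * |M t j j| := by rw [abs_of_nonpos hMjj]
        calc ∑ j, ∑ i, (w t i / r i) * (M t i j * w t j)
            ≤ ∑ j, (-phi t * r j + ε * |M t j j|) := Finset.sum_le_sum fun j _ => hper j
          _ = -phi t * (∑ j, r j) + ε * ∑ j, |M t j j| := by
              rw [Finset.sum_add_distrib, ← Finset.mul_sum, ← Finset.mul_sum]
          _ ≤ -phi t * (∑ j, r j) + ε * (C * phi t) := by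
              have := hMC t htI
              nlinarith
      -- assemble bound on g'
      have hIle : I t ≤ I b := primitive_mono hc hpos ht0 htb.le
      have hEle : Real.exp (I t) ≤ Real.exp (I b) := Real.exp_le_exp.mpr hIle
      have hEpos : (0:ℝ) < Real.exp (I t) := Real.exp_pos _
      simp only [hg'def]
      calc phi t * Real.exp (I t) * (∑ i, r i)
            + Real.exp (I t) * ∑ i, (2 * w t i * (∑ j, M t i j * w t j)) / (2 * r i)
          ≤ phi t * Real.exp (I t) * (∑ i, r i)
            + Real.exp (I t) * (-phi t * (∑ i, r i) + ε * (C * phi t)) := by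
            have := mul_le_mul_of_nonneg_left hkey hEpos.le
            linarith
        _ = Real.exp (I t) * (ε * (C * phi t)) := by ring
        _ ≤ Real.exp (I b) * (ε * (C * phi t)) := by
            apply mul_le_mul_of_nonneg_right hEle
            positivity
        _ = ε * (C * Real.exp (I b)) * phi t := by ring
    -- comparison
    set B : ℝ → ℝ := fun x => g 0 + ε * (C * Real.exp (I b)) * I x with hBdef
    have hcomp : g b ≤ B b := by
      apply image_le_of_deriv_right_le_deriv_boundary hgcont
        (fun x hx => hgderiv x hx.1) (by simp [hBdef, hgdef, hI0])
        (continuousOn_const.add ((hIcont.mono Icc_subset_Ici_self).const_smul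
          (ε * (C * Real.exp (I b))) |>.congr (fun x _ => by simp [smul_eq_mul, hIdef])))
        (fun x hx => ((primitive_hasDeriv hc hx.1).const_mul
          (ε * (C * Real.exp (I b)))).const_add (g 0))
        hbound (right_mem_Icc.mpr hb)
    have h2 := hcomp
    simp only [hBdef, hgdef] at h2 ⊢
    rw [hI0, Real.exp_zero, one_mul] at h2
    exact h2
  -- pass to the limit ε → 0⁺
  have hEb : (0:ℝ) < Real.exp (I b) := Real.exp_pos _
  have hlim : Real.exp (I b) * ∑ i, |w b i| ≤ (∑ i, |w 0 i|) + 0 * (C * Real.exp (I b)) * I b := by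
    refine le_of_tendsto_of_tendsto (b := 𝓝[>] (0:ℝ)) ?_ ?_
      (eventually_nhdsWithin_of_forall main)
    · have hcont2 : Continuous (fun ε : ℝ =>
          Real.exp (I b) * ∑ i, Real.sqrt ((w b i)^2 + ε^2)) := by
        apply continuous_const.mul
        apply continuous_finset_sum
        intro i _
        exact Real.continuous_sqrt.comp (continuous_const.add (continuous_pow 2))
      have := hcont2.tendsto 0
      have heval : Real.exp (I b) * ∑ i, Real.sqrt ((w b i)^2 + (0:ℝ)^2)
          = Real.exp (I b) * ∑ i, |w b i| := by
        congr 1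
        apply Finset.sum_congr rfl
        intro i _
        rw [show (0:ℝ)^2 = 0 by norm_num, add_zero, Real.sqrt_sq_eq_abs]
      rw [heval] at this
      exact this.mono_left nhdsWithin_le_nhds
    · have hcont2 : Continuous (fun ε : ℝ =>
          (∑ i, Real.sqrt ((w 0 i)^2 + ε^2)) + ε * (C * Real.exp (I b)) * I b) := by
        apply Continuous.add
        · apply continuous_finset_sum
          intro i _
          exact Real.continuous_sqrt.comp (continuous_const.add (continuous_pow 2))
        · exact (continuous_id.mul continuous_const).mul continuous_const
      have := hcont2.tendsto 0
      have heval : (∑ i, Real.sqrt ((w 0 i)^2 + (0:ℝ)^2)) + 0 * (C * Real.exp (I b)) * I b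
          = (∑ i, |w 0 i|) + 0 * (C * Real.exp (I b)) * I b := by
        congr 1
        apply Finset.sum_congr rfl
        intro i _
        rw [show (0:ℝ)^2 = 0 by norm_num, add_zero, Real.sqrt_sq_eq_abs]
      rw [heval] at this
      exact this.mono_left nhdsWithin_le_nhds
  rw [zero_mul, zero_mul, add_zero] at hlim
  rw [Real.exp_neg]
  calc ∑ i, |w b i| = (Real.exp (I b))⁻¹ * (Real.exp (I b) * ∑ i, |w b i|) := by
        field_simp
    _ ≤ (Real.exp (I b))⁻¹ * ∑ i, |w 0 i| :=
        mul_le_mul_of_nonneg_left hlim (by positivity)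

lemma eq_case (S : ℕ) (phi : ℝ → ℝ)
    (hc : ContinuousOn phi (Ici 0))
    (M : ℝ → Fin S → Fin S → ℝ)
    (hMcol : ∀ t ∈ Ici (0:ℝ), ∀ j, ∑ i, M t i j = -phi t)
    (w : ℝ → Fin S → ℝ)
    (hw : ∀ t ∈ Ici (0:ℝ), ∀ i, HasDerivWithinAt (fun s => w s i)
      (∑ j, M t i j * w t j) (Ici 0) t)
    {b : ℝ} (hb : 0 ≤ b) :
    ∑ i, w b i = Real.exp (-∫ τ in (0:ℝ)..b, phi τ) * ∑ i, w 0 i := by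
  set I : ℝ → ℝ := fun x => ∫ τ in (0:ℝ)..x, phi τ with hIdef
  have hI0 : I 0 = 0 := intervalIntegral.integral_same
  have hIcont : ContinuousOn I (Ici 0) := primitive_cont hc
  set g : ℝ → ℝ := fun t => Real.exp (I t) * ∑ i, w t i with hgdef
  have hgderiv : ∀ t ∈ Ico (0:ℝ) b, HasDerivWithinAt g 0 (Ici t) t := by
    intro t ht
    have ht0 : (0:ℝ) ≤ t := ht.1
    have hmono : Ici t ⊆ Ici (0:ℝ) := Ici_subset_Ici.mpr ht0
    have hE : HasDerivWithinAt (fun s => Real.exp (I s)) (Real.exp (I t) * phi t) (Ici t) t :=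
      (primitive_hasDeriv hc ht0).exp
    have hV : HasDerivWithinAt (fun s => ∑ i, w s i)
        (∑ i, ∑ j, M t i j * w t j) (Ici t) t :=
      HasDerivWithinAt.fun_sum fun i _ => (hw t ht0 i).mono hmono
    have hval : ∑ i, ∑ j, M t i j * w t j = -phi t * ∑ i, w t i := by
      rw [Finset.sum_comm]
      calc ∑ j, ∑ i, M t i j * w t j
          = ∑ j : Fin S, (∑ i, M t i j) * w t j := by
            apply Finset.sum_congr rfl
            intro j _
            rw [Finset.sum_mul]
        _ = ∑ j : Fin S, -phi t * w t j := by
            apply Finset.sum_congr rfl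
            intro j _
            rw [hMcol t ht0 j]
        _ = -phi t * ∑ j, w t j := by rw [← Finset.mul_sum]
    have := hE.mul hV
    refine this.congr_deriv ?_
    rw [hval]
    ring
  have hgcont : ContinuousOn g (Icc 0 b) := by
    apply ContinuousOn.mono _ (Icc_subset_Ici_self : Icc (0:ℝ) b ⊆ Ici 0)
    apply ContinuousOn.mul (Real.continuous_exp.comp_continuousOn hIcont)
    exact continuousOn_finset_sum _ fun i _ => fun t ht => (hw t ht i).continuousWithinAt
  have hconst := constant_of_has_deriv_right_zero hgcont hgderiv b (right_mem_Icc.mpr hb)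
  simp only [hgdef] at hconst
  rw [hI0, Real.exp_zero, one_mul] at hconst
  have hEb : (0:ℝ) < Real.exp (I b) := Real.exp_pos _
  rw [Real.exp_neg]
  rw [← hconst]
  field_simp
  rfl

lemma exQ_nonneg (S : ℕ) (phi : ℝ → ℝ) (i j : ℕ) {t : ℝ} (h : 0 ≤ phi t) :
    0 ≤ exQ S phi i j t := by
  unfold exQ; split_ifs <;> linarith

lemma exQ_le (S : ℕ) (phi : ℝ → ℝ) (i j : ℕ) {t : ℝ} (h : 0 ≤ phi t) :
    exQ S phi i j t ≤ 6 * phi t := by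
  unfold exQ; split_ifs <;> linarith

/-- Example 3 (sharp rate for a birth–death process with absorption in zero):
with `d_k = 2^{k−1}` every `α_k(t)` equals `φ(t)`, so
`‖D(z*(t) − z**(t))‖₁ ≤ exp(−∫₀ᵗ φ) ‖D(z*(0) − z**(0))‖₁`, with equality
whenever `z*(0) − z**(0) ≥ 0` componentwise. -/
theorem absorbing_bd_example_sharp_rate
    (S : ℕ) (hS : 2 ≤ S)
    (phi : ℝ → ℝ)
    (hphi : ContinuousOn phi (Ici 0) ∧ ∀ t ∈ Ici (0 : ℝ), 0 ≤ phi t)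
    (D : Matrix (Fin S) (Fin S) ℝ)
    (hD : D = Matrix.diagonal (fun i : Fin S => (2 : ℝ) ^ (i : ℕ)))
    (z₁ z₂ : ℝ → Fin S → ℝ)
    (hz₁ : ∀ t ∈ Ici (0 : ℝ), ∀ i, HasDerivWithinAt (fun s => z₁ s i)
      ((absB S (exQ S phi) t).mulVec (z₁ t) i) (Ici 0) t)
    (hz₂ : ∀ t ∈ Ici (0 : ℝ), ∀ i, HasDerivWithinAt (fun s => z₂ s i)
      ((absB S (exQ S phi) t).mulVec (z₂ t) i) (Ici 0) t) :
    (∀ t ∈ Ici (0 : ℝ), ∀ k : Fin S,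
      (∑ j ∈ (Finset.range (S + 1)).erase ((k : ℕ) + 1), exQ S phi ((k : ℕ) + 1) j t) -
        (∑ i ∈ (Finset.Icc 1 S).erase ((k : ℕ) + 1),
          (2 : ℝ) ^ (i - 1) / (2 : ℝ) ^ (k : ℕ) * exQ S phi ((k : ℕ) + 1) i t) =
        phi t) ∧
    (∀ t ∈ Ici (0 : ℝ),
      ∑ i, |D.mulVec (z₁ t - z₂ t) i| ≤
        Real.exp (-∫ τ in (0 : ℝ)..t, phi τ) * ∑ i, |D.mulVec (z₁ 0 - z₂ 0) i|) ∧
    ((∀ i, 0 ≤ z₁ 0 i - z₂ 0 i) →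
      ∀ t ∈ Ici (0 : ℝ),
        ∑ i, |D.mulVec (z₁ t - z₂ t) i| =
          Real.exp (-∫ τ in (0 : ℝ)..t, phi τ) * ∑ i, |D.mulVec (z₁ 0 - z₂ 0) i|) := by
  obtain ⟨hphic, hphi0⟩ := hphi
  set M : ℝ → Fin S → Fin S → ℝ :=
    fun t i j => (2:ℝ)^(i:ℕ) * absB S (exQ S phi) t i j / (2:ℝ)^(j:ℕ) with hMdef
  set w : ℝ → Fin S → ℝ := fun t i => (2:ℝ)^(i:ℕ) * (z₁ t i - z₂ t i) with hwdef
  have hDw : ∀ t : ℝ, ∀ i, D.mulVec (z₁ t - z₂ t) i = w t i := by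
    intro t i
    rw [hD, Matrix.mulVec_diagonal]
    simp [hwdef]
  have hw : ∀ t ∈ Ici (0:ℝ), ∀ i, HasDerivWithinAt (fun s => w s i)
      (∑ j, M t i j * w t j) (Ici 0) t := by
    intro t ht i
    have h := ((hz₁ t ht i).sub (hz₂ t ht i)).const_mul ((2:ℝ)^(i:ℕ))
    refine h.congr_deriv ?_
    symm
    simp only [Matrix.mulVec, dotProduct]
    rw [← Finset.sum_sub_distrib, Finset.mul_sum]
    apply Finset.sum_congr rfl
    intro j _
    have h2 : ((2:ℝ)^(j:ℕ)) ≠ 0 := by positivity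
    simp only [hMdef, hwdef]
    field_simp
  have hMoff : ∀ t ∈ Ici (0:ℝ), ∀ i j : Fin S, i ≠ j → 0 ≤ M t i j := by
    intro t ht i j hne
    have hq : 0 ≤ absB S (exQ S phi) t i j := by
      unfold absB
      rw [if_neg hne]
      exact exQ_nonneg S phi _ _ (hphi0 t ht)
    simp only [hMdef]
    positivity
  have hMcol : ∀ t ∈ Ici (0:ℝ), ∀ j, ∑ i, M t i j = -phi t :=
    fun t _ j => Mcol S hS phi t j
  have hMC : ∀ t ∈ Ici (0:ℝ), ∑ j, |M t j j| ≤ ((S:ℝ) * ((S + 1) * 6)) * phi t := by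
    intro t ht
    have hstep : ∀ j : Fin S, |M t j j| ≤ ((S:ℝ) + 1) * 6 * phi t := by
      intro j
      have h1 : M t j j = absB S (exQ S phi) t j j := by
        simp only [hMdef]
        have h2 : ((2:ℝ)^(j:ℕ)) ≠ 0 := by positivity
        field_simp
      have hA : 0 ≤ ∑ x ∈ (Finset.range (S + 1)).erase ((j:ℕ) + 1),
          exQ S phi ((j:ℕ) + 1) x t :=
        Finset.sum_nonneg fun x _ => exQ_nonneg S phi _ _ (hphi0 t ht)
      have hAle : ∑ x ∈ (Finset.range (S + 1)).erase ((j:ℕ) + 1),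
          exQ S phi ((j:ℕ) + 1) x t ≤ ((S:ℝ) + 1) * (6 * phi t) := by
        calc ∑ x ∈ (Finset.range (S + 1)).erase ((j:ℕ) + 1), exQ S phi ((j:ℕ) + 1) x t
            ≤ ∑ _x ∈ (Finset.range (S + 1)).erase ((j:ℕ) + 1), 6 * phi t :=
              Finset.sum_le_sum fun x _ => exQ_le S phi _ _ (hphi0 t ht)
          _ = (((Finset.range (S + 1)).erase ((j:ℕ) + 1)).card : ℝ) * (6 * phi t) := by
              rw [Finset.sum_const, nsmul_eq_mul]
          _ ≤ ((S:ℝ) + 1) * (6 * phi t) := by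
              apply mul_le_mul_of_nonneg_right _ (by have := hphi0 t ht; positivity)
              have hcard : ((Finset.range (S + 1)).erase ((j:ℕ) + 1)).card ≤ S + 1 :=
                le_trans (Finset.card_erase_le) (by rw [Finset.card_range])
              exact_mod_cast hcard
      rw [h1]
      unfold absB
      rw [if_pos rfl, abs_neg, abs_of_nonneg hA]
      linarith
    calc ∑ j, |M t j j| ≤ ∑ _j : Fin S, ((S:ℝ) + 1) * 6 * phi t :=
          Finset.sum_le_sum fun j _ => hstep j
      _ = (S:ℝ) * (((S:ℝ) + 1) * 6 * phi t) := by
          rw [Finset.sum_const, nsmul_eq_mul, Finset.card_univ, Fintype.card_fin]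
      _ = ((S:ℝ) * ((S + 1) * 6)) * phi t := by ring
  have part2 : ∀ t ∈ Ici (0 : ℝ),
      ∑ i, |D.mulVec (z₁ t - z₂ t) i| ≤
        Real.exp (-∫ τ in (0 : ℝ)..t, phi τ) * ∑ i, |D.mulVec (z₁ 0 - z₂ 0) i| := by
    intro t ht
    have h := contraction S phi hphic hphi0 M hMoff hMcol ((S:ℝ) * ((S + 1) * 6))
      (by positivity) hMC w hw ht
    calc ∑ i, |D.mulVec (z₁ t - z₂ t) i| = ∑ i, |w t i| :=
          Finset.sum_congr rfl fun i _ => by rw [hDw]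
      _ ≤ Real.exp (-∫ τ in (0 : ℝ)..t, phi τ) * ∑ i, |w 0 i| := h
      _ = Real.exp (-∫ τ in (0 : ℝ)..t, phi τ) * ∑ i, |D.mulVec (z₁ 0 - z₂ 0) i| := by
          congr 1
          exact Finset.sum_congr rfl fun i _ => by rw [hDw]
  refine ⟨fun t _ k => alpha_eq S hS phi t k, part2, ?_⟩
  intro hnn t ht
  have heq := eq_case S phi hphic M hMcol w hw ht
  have hw0 : ∀ i, 0 ≤ w 0 i := by
    intro i
    simp only [hwdef]
    exact mul_nonneg (by positivity) (hnn i)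
  apply le_antisymm (part2 t ht)
  calc Real.exp (-∫ τ in (0 : ℝ)..t, phi τ) * ∑ i, |D.mulVec (z₁ 0 - z₂ 0) i|
      = Real.exp (-∫ τ in (0 : ℝ)..t, phi τ) * ∑ i, w 0 i := by
        congr 1
        exact Finset.sum_congr rfl fun i _ => by rw [hDw, abs_of_nonneg (hw0 i)]
    _ = ∑ i, w t i := heq.symm
    _ ≤ ∑ i, |w t i| := Finset.sum_le_sum fun i _ => le_abs_self _
    _ = ∑ i, |D.mulVec (z₁ t - z₂ t) i| :=
        Finset.sum_congr rfl fun i _ => by rw [hDw]
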